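/- If a pure state |ψ⟩ of a finite-dimensional multipartite system has all nonnegative coefficients in some computational (product) basis, then among the product states maximizing |⟨λ|ψ⟩| there is at least one product state whose local states all have nonnegative coefficients in that same basis. -/

import Mathlib

open Finset

theorem positive_state_has_positive_closest_product_state
    (n : ℕ) (d : Fin n → ℕ) (hd : ∀ j, 0 < d j)
    (ψ : (∀ j, Fin (d j)) → ℂ)
    (hpos : ∀ x, ∃ r : ℝ, 0 ≤ r ∧ ψ x = (r : ℂ)) :
    ∃ σ : ∀ j, Fin (d j) → ℂ,
      (∀ j, ∑ i, ‖σ j i‖ ^ 2 = 1) ∧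
      (∀ j i, ∃ r : ℝ, 0 ≤ r ∧ σ j i = (r : ℂ)) ∧
      ∀ τ : ∀ j, Fin (d j) → ℂ, (∀ j, ∑ i, ‖τ j i‖ ^ 2 = 1) →
        ‖∑ x, (starRingEnd ℂ) (∏ j, τ j (x j)) * ψ x‖ ≤
        ‖∑ x, (starRingEnd ℂ) (∏ j, σ j (x j)) * ψ x‖ := by
  classical
  choose r hr0 hψ using hpos
  set S : Set (∀ j, Fin (d j) → ℂ) :=
    {τ | ∀ j, ∑ i, ‖τ j i‖ ^ 2 = 1} with hS
  set f : (∀ j, Fin (d j) → ℂ) → ℝ :=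
    fun τ => ‖∑ x, (starRingEnd ℂ) (∏ j, τ j (x j)) * ψ x‖ with hf
  have hSne : S.Nonempty := by
    refine ⟨fun j i => if i = ⟨0, hd j⟩ then 1 else 0, fun j => ?_⟩
    rw [Finset.sum_eq_single (⟨0, hd j⟩ : Fin (d j))]
    · simp
    · intro i _ hi; simp [hi]
    · simp
  have hSclosed : IsClosed S := by
    have : S = ⋂ j, {τ : ∀ j, Fin (d j) → ℂ | ∑ i, ‖τ j i‖ ^ 2 = 1} := by
      ext τ; simp [hS, Set.mem_iInter]
    rw [this]
    refine isClosed_iInter fun j => isClosed_eq ?_ continuous_const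
    refine continuous_finset_sum _ fun i _ => ?_
    have h1 : Continuous fun τ : ∀ j, Fin (d j) → ℂ => τ j i :=
      (continuous_apply i).comp (continuous_apply j)
    exact (continuous_norm.comp h1).pow 2
  have hSbdd : Bornology.IsBounded S := by
    rw [Metric.isBounded_iff_subset_closedBall 0]
    refine ⟨1, fun τ hτ => ?_⟩
    rw [Metric.mem_closedBall, dist_zero_right]
    rw [pi_norm_le_iff_of_nonneg zero_le_one]
    intro j
    rw [pi_norm_le_iff_of_nonneg zero_le_one]
    intro i
    have h1 := hτ j
    have h2 : ‖τ j i‖ ^ 2 ≤ 1 := by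
      rw [← h1]
      exact Finset.single_le_sum (f := fun k => ‖τ j k‖ ^ 2) (fun k _ => sq_nonneg _) (mem_univ i)
    nlinarith [norm_nonneg (τ j i)]
  have hScompact : IsCompact S :=
    Metric.isCompact_of_isClosed_isBounded hSclosed hSbdd
  have hfc : Continuous f := by
    apply continuous_norm.comp
    apply continuous_finset_sum
    intro x _
    refine Continuous.mul ?_ continuous_const
    refine Complex.continuous_conj.comp ?_
    exact continuous_finset_prod _ fun j _ => (continuous_apply (x j)).comp (continuous_apply j)
  obtain ⟨τ₀, hτ₀S, hmax⟩ := hScompact.exists_isMaxOn hSne hfc.continuousOn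
  set σ : ∀ j, Fin (d j) → ℂ := fun j i => ((‖τ₀ j i‖ : ℝ) : ℂ) with hσ
  have hσabs : ∀ j i, ‖σ j i‖ = ‖τ₀ j i‖ := by
    intro j i
    simp [hσ, Complex.norm_real]
  have hσS : σ ∈ S := by
    intro j
    simp only [hσabs]
    exact hτ₀S j
  have hsum : ∑ x, (starRingEnd ℂ) (∏ j, σ j (x j)) * ψ x
      = ((∑ x, (∏ j, ‖τ₀ j (x j)‖) * r x : ℝ) : ℂ) := by
    rw [Complex.ofReal_sum]
    refine Finset.sum_congr rfl fun x _ => ?_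
    rw [hψ x, hσ]
    rw [← Complex.ofReal_prod, Complex.conj_ofReal, ← Complex.ofReal_mul]
  have hsumnn : 0 ≤ ∑ x, (∏ j, ‖τ₀ j (x j)‖) * r x :=
    Finset.sum_nonneg fun x _ =>
      mul_nonneg (Finset.prod_nonneg fun j _ => norm_nonneg _) (hr0 x)
  have hfσ : f σ = ∑ x, (∏ j, ‖τ₀ j (x j)‖) * r x := by
    rw [hf]
    simp only
    rw [hsum, Complex.norm_of_nonneg hsumnn]
  have hτ₀le : f τ₀ ≤ f σ := by
    rw [hfσ, hf]
    calc ‖∑ x, (starRingEnd ℂ) (∏ j, τ₀ j (x j)) * ψ x‖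
        ≤ ∑ x, ‖(starRingEnd ℂ) (∏ j, τ₀ j (x j)) * ψ x‖ :=
          norm_sum_le _ _
      _ = ∑ x, (∏ j, ‖τ₀ j (x j)‖) * r x := by
          refine Finset.sum_congr rfl fun x _ => ?_
          rw [norm_mul, Complex.norm_conj, norm_prod, hψ x,
            Complex.norm_of_nonneg (hr0 x)]
  refine ⟨σ, hσS, fun j i => ⟨‖τ₀ j i‖, norm_nonneg _, rfl⟩, ?_⟩
  intro τ hτ
  exact le_trans (le_trans (hmax hτ) hτ₀le) le_rfl
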